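/- Fix a positive integer l, generic parameters y, j, and integer i ≥ 1. If s₁(k) is the unique polynomial solution of P_l(2i, i+l−k) = (i+l−k)(−2y−3i−l+2j−k)s₁(k+1) − (i+l+k)(y−j+k)s₁(k), and s₂(k) is the unique polynomial solution of P_l(2i, i+l−k) = (i+l−k)(y−j−k)s₂(k+1) − (i+l+k)(−2y−3i−l+2j+k)s₂(k), then s₁(k) = s₂(1−k) for all k; in particular s₁(1) = s₂(0). -/

import Mathlib

open Finset Polynomial

noncomputable section

set_option maxHeartbeats 1000000

/-- rising factorial -/
def rf {R : Type*} [CommRing R] (a : R) (k : ℕ) : R := ∏ i ∈ Finset.range k, (a + i)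

/-- the polynomial `(x²+x+1)^{l-1}(2x+1)(x+2)(x-1)` -/
def APoly (l : ℕ) : Polynomial ℚ :=
  (X ^ 2 + X + 1) ^ (l - 1) * (2 * X + 1) * (X + 2) * (X - 1)

/-- `P_l(e,f) = Σ_r a_r (e)_r (−f)_{2l+1−r}` -/
def PP (l : ℕ) {K : Type*} [Field K] (e f : K) : K :=
  ∑ r ∈ Finset.range (2 * l + 2), ((APoly l).coeff r : K) * rf e r * rf (-f) (2 * l + 1 - r)

/-- the field of rational functions in the two indeterminates `y` and `j` -/
abbrev K : Type := FractionRing (MvPolynomial (Fin 2) ℚ)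

/-- the indeterminate `y` -/
def yv : K := algebraMap (MvPolynomial (Fin 2) ℚ) K (MvPolynomial.X 0)

/-- the indeterminate `j` -/
def jv : K := algebraMap (MvPolynomial (Fin 2) ℚ) K (MvPolynomial.X 1)

lemma rf_zero {R : Type*} [CommRing R] (a : R) : rf a 0 = 1 := by simp [rf]

lemma rf_succ {R : Type*} [CommRing R] (a : R) (k : ℕ) : rf a (k+1) = rf a k * (a + k) := by
  simp [rf, Finset.prod_range_succ]

lemma rf_add {R : Type*} [CommRing R] (a : R) (r s : ℕ) :
    rf a (r + s) = rf a r * rf (a + r) s := by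
  rw [rf, rf, rf, Finset.prod_range_add]
  congr 1
  refine Finset.prod_congr rfl fun i _ => ?_
  push_cast; ring

lemma chuVan {F : Type*} [Field F] [CharZero F] :
    ∀ (n : ℕ) (a b : F), ∑ r ∈ Finset.range (n+1), (n.choose r : F) * rf a r * rf b (n - r)
      = rf (a + b) n := by
  intro n
  induction n with
  | zero => intro a b; simp [rf]
  | succ n ih =>
    intro a b
    have hsplit : ∑ r ∈ Finset.range (n+2), ((n+1).choose r : F) * rf a r * rf b (n+1-r)
        = (∑ r ∈ Finset.range (n+1), (n.choose r : F) * rf a r * rf b (n+1-r))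
          + ∑ r ∈ Finset.range (n+1), (n.choose r : F) * rf a (r+1) * rf b (n-r) := by
      rw [Finset.sum_range_succ' (fun r => ((n+1).choose r : F) * rf a r * rf b (n+1-r)) (n+1)]
      have peel : ∑ r ∈ Finset.range (n+1), (n.choose r : F) * rf a r * rf b (n+1-r)
          = (∑ r ∈ Finset.range n, (n.choose (r+1) : F) * rf a (r+1) * rf b (n-r)) + rf b (n+1) := by
        rw [Finset.sum_range_succ' (fun r => (n.choose r : F) * rf a r * rf b (n+1-r)) n]
        simp [rf_zero]
      rw [peel]
      have hch : ∀ r, ((n+1).choose (r+1) : F) = (n.choose r : F) + (n.choose (r+1) : F) := by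
        intro r; rw [Nat.choose_succ_succ]; push_cast; ring
      have hlast : ∑ r ∈ Finset.range (n+1), (n.choose (r+1) : F) * rf a (r+1) * rf b (n-r)
          = ∑ r ∈ Finset.range n, (n.choose (r+1) : F) * rf a (r+1) * rf b (n-r) := by
        rw [Finset.sum_range_succ]; simp
      calc (∑ r ∈ Finset.range (n+1), ((n+1).choose (r+1) : F) * rf a (r+1) * rf b (n+1-(r+1)))
            + ((n+1).choose 0 : F) * rf a 0 * rf b (n+1-0)
          = (∑ r ∈ Finset.range (n+1), ((n.choose r : F) * rf a (r+1) * rf b (n-r)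
              + (n.choose (r+1) : F) * rf a (r+1) * rf b (n-r))) + rf b (n+1) := by
            simp only [rf_zero, Nat.choose_zero_right, Nat.cast_one, one_mul, mul_one,
              Nat.succ_sub_succ_eq_sub, Nat.sub_zero]
            congr 1
            refine Finset.sum_congr rfl fun r _ => ?_
            rw [hch]; ring
        _ = _ := by rw [Finset.sum_add_distrib, hlast]; ring
    rw [hsplit]
    have hcomb : ∀ r ∈ Finset.range (n+1),
        (n.choose r : F) * rf a r * rf b (n+1-r) + (n.choose r : F) * rf a (r+1) * rf b (n-r)
        = (n.choose r : F) * rf a r * rf b (n-r) * (a + b + n) := by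
      intro r hr
      rw [Finset.mem_range] at hr
      have h1 : n + 1 - r = (n - r) + 1 := by omega
      rw [h1, rf_succ, rf_succ]
      have h2 : ((n - r : ℕ) : F) = (n : F) - r := by
        have : (r:ℕ) ≤ n := by omega
        push_cast [Nat.cast_sub this]; ring
      rw [h2]; ring
    rw [← Finset.sum_add_distrib, Finset.sum_congr rfl hcomb, ← Finset.sum_mul, ih a b,
      rf_succ]

lemma rf_reflect {F : Type*} [Field F] [CharZero F] (a : F) (k : ℕ) :
    rf (-a - k + 1) k = (-1)^k * rf a k := by
  rw [rf, rf, ← Finset.prod_range_reflect (fun i => (-a - k + 1 + i : F)) k]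
  have : ∀ i ∈ Finset.range k, (-a - (k:F) + 1 + ((k - 1 - i : ℕ) : F)) = -(a + i) := by
    intro i hi
    rw [Finset.mem_range] at hi
    have : ((k - 1 - i : ℕ) : F) = (k : F) - 1 - i := by
      have h1 : i ≤ k - 1 := by omega
      have h2 : 1 ≤ k := by omega
      push_cast [Nat.cast_sub h1, Nat.cast_sub h2]; ring
    rw [this]; ring
  rw [Finset.prod_congr rfl this]
  have h2 : ∀ i ∈ Finset.range k, -(a + (i:F)) = (-1) * (a + i) := by intro i _; ring
  rw [Finset.prod_congr rfl h2, Finset.prod_mul_distrib, Finset.prod_const]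
  simp

lemma APoly_natDegree_le (l : ℕ) (hl : 0 < l) : (APoly l).natDegree ≤ 2 * l + 1 := by
  unfold APoly
  compute_degree
  all_goals omega

lemma PhiEq (l : ℕ) (hl : 0 < l) :
    ∑ r ∈ Finset.range (2*l+2), C ((-1)^r * (APoly l).coeff r) * X^r * (1+X)^(2*l+1-r)
      = APoly l := by
  set Kx := FractionRing (Polynomial ℚ)
  set φ := algebraMap (Polynomial ℚ) Kx with hφ
  have hinj : Function.Injective φ := IsFractionRing.injective _ _
  apply hinj
  set ψ : ℚ →+* Kx := φ.comp (C : ℚ →+* ℚ[X]) with hψ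
  set x : Kx := φ X with hx
  have hu0 : (1 + X : ℚ[X]) ≠ 0 := by
    intro h
    have := congrArg (fun p => Polynomial.eval (0:ℚ) p) h
    simp at this
  have hu : (1 + x) ≠ 0 := by
    rw [hx, ← map_one φ, ← map_add φ]
    exact (map_ne_zero_iff φ hinj).mpr hu0
  set t : Kx := -x / (1+x) with ht
  have hL : φ (∑ r ∈ Finset.range (2*l+2), C ((-1)^r * (APoly l).coeff r) * X^r * (1+X)^(2*l+1-r))
      = (1+x)^(2*l+1) * Polynomial.eval₂ ψ t (APoly l) := by
    rw [map_sum]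
    have hdeg : (APoly l).natDegree < 2*l+2 := by have := APoly_natDegree_le l hl; omega
    rw [Polynomial.eval₂_eq_sum_range' ψ hdeg t, Finset.mul_sum]
    refine Finset.sum_congr rfl fun r hr => ?_
    rw [Finset.mem_range] at hr
    have hrn : r ≤ 2*l+1 := by omega
    have hpow : (1+x)^(2*l+1) * t^r = (-1)^r * x^r * (1+x)^(2*l+1-r) := by
      have hsplit : (1+x)^(2*l+1) = (1+x)^(2*l+1-r) * (1+x)^r := by
        rw [← pow_add]; congr 1; omega
      have hcanc : (-x)^r / (1+x)^r * (1+x)^r = (-x)^r :=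
        div_mul_cancel₀ _ (pow_ne_zero r hu)
      calc (1+x)^(2*l+1) * t^r = (1+x)^(2*l+1-r) * ((-x)^r / (1+x)^r * (1+x)^r) := by
            rw [hsplit, ht, div_pow]; ring
        _ = (1+x)^(2*l+1-r) * (-x)^r := by rw [hcanc]
        _ = (-1)^r * x^r * (1+x)^(2*l+1-r) := by rw [neg_pow]; ring
    have hφC : φ (C ((-1:ℚ)^r * (APoly l).coeff r)) = (-1)^r * ψ ((APoly l).coeff r) := by
      simp only [map_mul, map_pow, map_neg, map_one, hψ, RingHom.comp_apply]
    calc φ (C ((-1:ℚ)^r * (APoly l).coeff r) * X^r * (1+X)^(2*l+1-r))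
        = φ (C ((-1:ℚ)^r * (APoly l).coeff r)) * x^r * (1+x)^(2*l+1-r) := by
          rw [map_mul, map_mul, map_pow, map_pow, map_add, map_one, ← hx]
      _ = ψ ((APoly l).coeff r) * ((-1)^r * x^r * (1+x)^(2*l+1-r)) := by rw [hφC]; ring
      _ = ψ ((APoly l).coeff r) * ((1+x)^(2*l+1) * t^r) := by rw [hpow]
      _ = (1+x)^(2*l+1) * (ψ ((APoly l).coeff r) * t ^ r) := by ring
  rw [hL]
  have haeA : Polynomial.eval₂ ψ t (APoly l) = (t^2+t+1)^(l-1) * (2*t+1) * (t+2) * (t-1) := by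
    simp only [APoly, eval₂_mul, eval₂_pow, eval₂_add, eval₂_sub, eval₂_one, eval₂_X,
      eval₂_ofNat]
  have hφA : φ (APoly l) = (x^2+x+1)^(l-1) * (2*x+1) * (x+2) * (x-1) := by
    simp only [APoly, map_mul, map_pow, map_add, map_sub, map_one, map_ofNat, ← hx]
  rw [haeA, hφA]
  have htu : t * (1+x) = -x := by rw [ht]; exact div_mul_cancel₀ _ hu
  have h1 : (1+x)^2 * (t^2+t+1) = x^2+x+1 := by
    calc (1+x)^2 * (t^2+t+1) = (t*(1+x))^2 + (t*(1+x))*(1+x) + (1+x)^2 := by ring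
      _ = x^2+x+1 := by rw [htu]; ring
  have h2 : (1+x)^3 * ((2*t+1) * (t+2) * (t-1)) = (2*x+1) * (x+2) * (x-1) := by
    calc (1+x)^3 * ((2*t+1) * (t+2) * (t-1))
        = (2*(t*(1+x)) + (1+x)) * (t*(1+x) + 2*(1+x)) * (t*(1+x) - (1+x)) := by ring
      _ = (2*x+1) * (x+2) * (x-1) := by rw [htu]; ring
  calc (1+x)^(2*l+1) * ((t^2+t+1)^(l-1) * (2*t+1) * (t+2) * (t-1))
      = ((1+x)^2 * (t^2+t+1))^(l-1) * ((1+x)^3 * ((2*t+1) * (t+2) * (t-1))) := by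
        have hsplit : ((1:Kx)+x)^(2*l+1) = ((1+x)^2)^(l-1) * (1+x)^3 := by
          rw [← pow_mul, ← pow_add]; congr 1; omega
        rw [hsplit, mul_pow]; ring
    _ = (x^2+x+1)^(l-1) * ((2*x+1) * (x+2) * (x-1)) := by rw [h1, h2]
    _ = (x^2+x+1)^(l-1) * (2*x+1) * (x+2) * (x-1) := by ring

lemma coeffId (l : ℕ) (hl : 0 < l) (m : ℕ) (hm : m ≤ 2*l+1) :
    ∑ r ∈ Finset.range (m+1),
      (-1:ℚ)^r * (APoly l).coeff r * ((2*l+1-r).choose (m-r) : ℚ)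
      = (APoly l).coeff m := by
  have h := congrArg (fun p : ℚ[X] => p.coeff m) (PhiEq l hl)
  simp only [Polynomial.finset_sum_coeff] at h
  have hterm : ∀ r, (C ((-1:ℚ)^r * (APoly l).coeff r) * X^r * (1+X)^(2*l+1-r)).coeff m
      = if r ≤ m then (-1:ℚ)^r * (APoly l).coeff r * ((2*l+1-r).choose (m-r) : ℚ) else 0 := by
    intro r
    have e : (C ((-1:ℚ)^r * (APoly l).coeff r) * X^r * (1+X)^(2*l+1-r))
        = C ((-1:ℚ)^r * (APoly l).coeff r) * ((1+X)^(2*l+1-r) * X^r) := by ring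
    rw [e, coeff_C_mul, Polynomial.coeff_mul_X_pow']
    have hc : ((1+X : ℚ[X])^(2*l+1-r)).coeff (m-r) = ((2*l+1-r).choose (m-r) : ℚ) := by
      rw [add_comm 1 (X : ℚ[X]), Polynomial.coeff_X_add_one_pow]
    split_ifs with hrm
    · rw [hc]
    · ring
  rw [Finset.sum_congr rfl (fun r _ => hterm r)] at h
  have hsub : Finset.range (m+1) ⊆ Finset.range (2*l+2) := by
    intro r hr; rw [Finset.mem_range] at *; omega
  rw [← Finset.sum_subset hsub (fun r _ hr => by
    rw [Finset.mem_range] at hr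
    exact if_neg (by omega))] at h
  rw [← h]
  refine Finset.sum_congr rfl fun r hr => ?_
  rw [Finset.mem_range] at hr
  rw [if_pos (by omega)]

lemma PP_antisym {F : Type*} [Field F] [CharZero F] (l : ℕ) (hl : 0 < l) (e f : F) :
    PP l e (e + (2*l : ℕ) - f) = - PP l e f := by
  unfold PP
  have hstep : ∀ r ∈ Finset.range (2*l+2),
      ((APoly l).coeff r : F) * rf e r * rf (-(e + (2*l:ℕ) - f)) (2*l+1-r)
      = ∑ s ∈ Finset.range ((2*l+1-r)+1), (-1:F)^(2*l+1-r) * ((APoly l).coeff r : F)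
          * ((2*l+1-r).choose s : F) * rf e (r+s) * rf (-f) (2*l+1-(r+s)) := by
    intro r hr
    rw [Finset.mem_range] at hr
    have hrn : r ≤ 2*l+1 := by omega
    have h1 : -(e + ((2*l:ℕ):F) - f) = -(e + (r:F) - f) - ((2*l+1-r : ℕ):F) + 1 := by
      rw [Nat.cast_sub hrn]
      push_cast
      ring
    rw [h1, rf_reflect]
    have hVan := chuVan (2*l+1-r) (e + (r:F)) (-f)
    have harg : e + (r:F) - f = (e + (r:F)) + (-f) := by ring
    rw [harg, ← hVan, Finset.mul_sum, Finset.mul_sum]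
    apply Finset.sum_congr rfl
    intro s hs
    rw [Finset.mem_range] at hs
    have h3 : rf e r * rf (e + (r:F)) s = rf e (r+s) := (rf_add e r s).symm
    have h4 : 2*l+1-r-s = 2*l+1-(r+s) := by omega
    rw [h4]
    calc ((APoly l).coeff r : F) * rf e r
          * ((-1:F)^(2*l+1-r) * (((2*l+1-r).choose s : F) * rf (e + (r:F)) s * rf (-f) (2*l+1-(r+s))))
        = (-1:F)^(2*l+1-r) * ((APoly l).coeff r : F) * ((2*l+1-r).choose s : F)
            * (rf e r * rf (e + (r:F)) s) * rf (-f) (2*l+1-(r+s)) := by ring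
      _ = _ := by rw [h3]
  rw [Finset.sum_congr rfl hstep]
  -- reindex double sum
  rw [Finset.sum_sigma' (Finset.range (2*l+2)) (fun r => Finset.range ((2*l+1-r)+1))]
  have hbij : ∑ x ∈ (Finset.range (2*l+2)).sigma (fun r => Finset.range ((2*l+1-r)+1)),
        (-1:F)^(2*l+1-x.1) * ((APoly l).coeff x.1 : F) * ((2*l+1-x.1).choose x.2 : F)
          * rf e (x.1+x.2) * rf (-f) (2*l+1-(x.1+x.2))
      = ∑ y ∈ (Finset.range (2*l+2)).sigma (fun m => Finset.range (m+1)),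
        (-1:F)^(2*l+1-y.2) * ((APoly l).coeff y.2 : F) * ((2*l+1-y.2).choose (y.1-y.2) : F)
          * rf e y.1 * rf (-f) (2*l+1-y.1) := by
    refine Finset.sum_nbij' (fun x => ⟨x.1+x.2, x.1⟩) (fun y => ⟨y.2, y.1-y.2⟩) ?_ ?_ ?_ ?_ ?_
    · intro a ha
      simp only [Finset.mem_sigma, Finset.mem_range] at *
      omega
    · intro a ha
      simp only [Finset.mem_sigma, Finset.mem_range] at *
      omega
    · intro a ha
      simp only [Finset.mem_sigma, Finset.mem_range] at ha
      simp only [Nat.add_sub_cancel_left]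
    · intro a ha
      simp only [Finset.mem_sigma, Finset.mem_range] at ha
      have : a.2 + (a.1 - a.2) = a.1 := by omega
      simp only [this]
    · intro a ha
      simp only [Finset.mem_sigma, Finset.mem_range] at ha
      simp only [Nat.add_sub_cancel_left]
  rw [hbij, Finset.sum_sigma, ← Finset.sum_neg_distrib]
  refine Finset.sum_congr rfl fun m hm => ?_
  dsimp only
  rw [Finset.mem_range] at hm
  have hmn : m ≤ 2*l+1 := by omega
  have hcoe : ∑ r ∈ Finset.range (m+1),
      (-1:F)^r * ((APoly l).coeff r : F) * ((2*l+1-r).choose (m-r) : F)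
      = ((APoly l).coeff m : F) := by
    have hq := coeffId l hl m hmn
    have := congrArg (fun q : ℚ => (q : F)) hq
    push_cast at this
    exact this
  have hsign : ∀ r, r ≤ 2*l+1 → (-1:F)^(2*l+1-r) = -(-1:F)^r := by
    intro r hr
    have h5 : (-1:F)^(2*l+1-r) * (-1:F)^r = (-1:F)^(2*l+1) := by
      rw [← pow_add]
      congr 1
      omega
    have h6 : (-1:F)^(2*l+1) = -1 := Odd.neg_one_pow ⟨l, by ring⟩
    have h7 : (-1:F)^r * (-1:F)^r = 1 := by
      rw [← pow_add, ← two_mul, pow_mul]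
      norm_num
    calc (-1:F)^(2*l+1-r) = (-1:F)^(2*l+1-r) * ((-1:F)^r * (-1:F)^r) := by rw [h7, mul_one]
      _ = ((-1:F)^(2*l+1-r) * (-1:F)^r) * (-1:F)^r := by ring
      _ = -(-1:F)^r := by rw [h5, h6]; ring
  calc ∑ r ∈ Finset.range (m+1), (-1:F)^(2*l+1-r) * ((APoly l).coeff r : F)
        * ((2*l+1-r).choose (m-r) : F) * rf e m * rf (-f) (2*l+1-m)
      = ∑ r ∈ Finset.range (m+1), -((-1:F)^r * ((APoly l).coeff r : F)
        * ((2*l+1-r).choose (m-r) : F)) * (rf e m * rf (-f) (2*l+1-m)) := by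
        refine Finset.sum_congr rfl fun r hr => ?_
        rw [Finset.mem_range] at hr
        rw [hsign r (by omega)]
        ring
    _ = -((∑ r ∈ Finset.range (m+1), (-1:F)^r * ((APoly l).coeff r : F)
        * ((2*l+1-r).choose (m-r) : F)) * (rf e m * rf (-f) (2*l+1-m))) := by
        rw [Finset.sum_mul, ← Finset.sum_neg_distrib]
        exact Finset.sum_congr rfl fun r _ => by ring
    _ = -(((APoly l).coeff m : F) * rf e m * rf (-f) (2*l+1-m)) := by rw [hcoe]; ring

instance K_charZero : CharZero K :=
  charZero_of_injective_algebraMap (IsFractionRing.injective (MvPolynomial (Fin 2) ℚ) K)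

lemma nz (q : ℚ) : yv - jv + (q : K) ≠ 0 := by
  have hC : algebraMap (MvPolynomial (Fin 2) ℚ) K (MvPolynomial.C q) = (q:K) := by
    have h := eq_ratCast ((algebraMap (MvPolynomial (Fin 2) ℚ) K).comp
      (MvPolynomial.C : ℚ →+* MvPolynomial (Fin 2) ℚ)) q
    exact h
  have hmap : algebraMap (MvPolynomial (Fin 2) ℚ) K
      (MvPolynomial.X 0 - MvPolynomial.X 1 + MvPolynomial.C q) = yv - jv + (q:K) := by
    rw [map_add, map_sub, hC, yv, jv]
  intro h
  rw [← hmap] at h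
  have hp : (MvPolynomial.X 0 - MvPolynomial.X 1 + MvPolynomial.C q : MvPolynomial (Fin 2) ℚ) ≠ 0 := by
    intro h0
    have h1 := congrArg (MvPolynomial.eval (fun i : Fin 2 => if i = 0 then 1 - q else 0)) h0
    simp [MvPolynomial.eval_X, MvPolynomial.eval_C] at h1
  exact hp (IsFractionRing.injective (MvPolynomial (Fin 2) ℚ) K (by rw [h, map_zero]))

theorem stmt18 (l : ℕ) (hl : 0 < l) (i : ℤ) (hi : 1 ≤ i)
    (s₁ s₂ : Polynomial K)
    (h₁ : ∀ k : K, PP l ((2 * i : ℤ) : K) ((i : K) + l - k)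
      = ((i : K) + l - k) * (-2 * yv - 3 * i - l + 2 * jv - k) * s₁.eval (k + 1)
        - ((i : K) + l + k) * (yv - jv + k) * s₁.eval k)
    (h₂ : ∀ k : K, PP l ((2 * i : ℤ) : K) ((i : K) + l - k)
      = ((i : K) + l - k) * (yv - jv - k) * s₂.eval (k + 1)
        - ((i : K) + l + k) * (-2 * yv - 3 * i - l + 2 * jv + k) * s₂.eval k) :
    ∀ k : K, s₁.eval k = s₂.eval (1 - k) := by
  set D : Polynomial K := s₁ - s₂.comp (Polynomial.C 1 - Polynomial.X) with hDdef
  have hDeval : ∀ k : K, D.eval k = s₁.eval k - s₂.eval (1 - k) := by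
    intro k; simp [hDdef, Polynomial.eval_comp]
  have key : ∀ k : K, ((i:K) + l - k) * (-2 * yv - 3 * i - l + 2 * jv - k) * D.eval (k+1)
      = ((i:K) + l + k) * (yv - jv + k) * D.eval k := by
    intro k
    have e1 := h₁ k
    have e2 := h₂ (-k)
    have e3 : PP l ((2 * i : ℤ) : K) (((2 * i : ℤ) : K) + ((2*l : ℕ):K) - ((i:K) + l - k))
        = - PP l ((2 * i : ℤ) : K) ((i:K) + l - k) := PP_antisym l hl _ _
    rw [show ((2 * i : ℤ) : K) + ((2*l : ℕ):K) - ((i:K) + l - k) = (i:K) + l - (-k) by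
      push_cast; ring] at e3
    rw [e3] at e2
    rw [hDeval, hDeval]
    rw [show (1:K) - (k+1) = -k by ring]
    rw [show (-k + 1 : K) = 1 - k by ring] at e2
    linear_combination -e1 - e2
  have hroot : ∀ n : ℕ, D.eval ((1:K) - yv + jv + n) = 0 := by
    intro n
    induction n with
    | zero =>
      have hk := key (jv - yv)
      have h0 : ((i:K) + l + (jv - yv)) * (yv - jv + (jv - yv)) * D.eval (jv - yv) = 0 := by
        have : yv - jv + (jv - yv) = 0 := by ring
        rw [this]; ring
      rw [h0] at hk
      have ha : ((i:K) + l - (jv - yv)) ≠ 0 := by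
        rw [show ((i:K) + l - (jv - yv)) = yv - jv + (((i + l : ℤ) : ℚ) : K) by push_cast; ring]
        exact nz _
      have hb : (-2 * yv - 3 * (i:K) - l + 2 * jv - (jv - yv)) ≠ 0 := by
        rw [show (-2 * yv - 3 * (i:K) - l + 2 * jv - (jv - yv))
            = -(yv - jv + (((3*i + l : ℤ) : ℚ) : K)) by push_cast; ring]
        exact neg_ne_zero.mpr (nz _)
      have hd : D.eval (jv - yv + 1) = 0 := by
        rcases mul_eq_zero.mp hk with h | h
        · rcases mul_eq_zero.mp h with h' | h'
          · exact absurd h' ha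
          · exact absurd h' hb
        · exact h
      rw [show (1:K) - yv + jv + ((0:ℕ):K) = jv - yv + 1 by push_cast; ring]
      exact hd
    | succ n ih =>
      have hk := key ((1:K) - yv + jv + n)
      rw [ih, mul_zero] at hk
      have ha : ((i:K) + l - ((1:K) - yv + jv + n)) ≠ 0 := by
        rw [show ((i:K) + l - ((1:K) - yv + jv + n))
            = yv - jv + (((i + l - 1 - n : ℤ) : ℚ) : K) by push_cast; ring]
        exact nz _
      have hb : (-2 * yv - 3 * (i:K) - l + 2 * jv - ((1:K) - yv + jv + n)) ≠ 0 := by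
        rw [show (-2 * yv - 3 * (i:K) - l + 2 * jv - ((1:K) - yv + jv + n))
            = -(yv - jv + (((3*i + l + 1 + n : ℤ) : ℚ) : K)) by push_cast; ring]
        exact neg_ne_zero.mpr (nz _)
      have hd : D.eval ((1:K) - yv + jv + n + 1) = 0 := by
        rcases mul_eq_zero.mp hk with h | h
        · rcases mul_eq_zero.mp h with h' | h'
          · exact absurd h' ha
          · exact absurd h' hb
        · exact h
      rw [show (1:K) - yv + jv + ((n+1:ℕ):K) = (1:K) - yv + jv + n + 1 by push_cast; ring]
      exact hd
  have hDzero : D = 0 := by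
    apply Polynomial.eq_zero_of_infinite_isRoot
    apply Set.infinite_of_injective_forall_mem
      (f := fun n : ℕ => (1:K) - yv + jv + n)
    · intro a b hab
      simp only at hab
      exact Nat.cast_injective (add_left_cancel hab)
    · intro n
      exact hroot n
  intro k
  have h := hDeval k
  rw [hDzero, Polynomial.eval_zero] at h
  exact sub_eq_zero.mp h.symm
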